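/- Let M = (E, r) be a finite matroid satisfying R(k,m) for some m ≥ k ≥ 1, with normalized rank function ρ = r/r(E). Then the Hausdorff distance between T_k(ρ) and T_k^Δ(ρ) is at most k·m/r(E), where T_k^Δ(ρ) is the set of k-crops over tuples of pairwise disjoint sets. -/

import Mathlib

/-- The rank of a set `X` in a matroid `M`: the largest cardinality of an independent
subset of `X`. -/
noncomputable def mrk {α : Type*} (M : Matroid α) (X : Set α) : ℕ :=
  sSup (Set.ncard '' {I | M.Indep I ∧ I ⊆ X})

/-- The set `T_k(ρ)` of `k`-crops of the normalized rank function `ρ = r/c` of a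
matroid `M`, over arbitrary `k`-tuples of subsets of the ground set. -/
noncomputable def matCrops {α : Type*} (M : Matroid α) (c : ℝ) (k : ℕ) :
    Set (Finset (Fin k) → ℝ) :=
  {ψ | ∃ A : Fin k → Set α, (∀ i, A i ⊆ M.E) ∧
      ψ = fun I => (mrk M (⋃ i ∈ I, A i) : ℝ) / c}

/-- The set `T_k^Δ(ρ)`: `k`-crops over tuples of pairwise disjoint subsets of the
ground set. -/
noncomputable def matCropsDisj {α : Type*} (M : Matroid α) (c : ℝ) (k : ℕ) :
    Set (Finset (Fin k) → ℝ) :=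
  {ψ | ∃ A : Fin k → Set α, (∀ i, A i ⊆ M.E) ∧ Pairwise (Function.onFun Disjoint A) ∧
      ψ = fun I => (mrk M (⋃ i ∈ I, A i) : ℝ) / c}

namespace Stmt9Aux

open Set Matroid

variable {α : Type*} {M : Matroid α} {X Y I J B : Set α}

lemma flat_closure (M : Matroid α) (X : Set α) : M.IsFlat (M.closure X) := by
  rw [Matroid.closure_def, Set.sInter_eq_iInter]
  haveI : Nonempty {F // F ∈ {F | M.IsFlat F ∧ X ∩ M.E ⊆ F}} :=
    ⟨⟨M.E, M.ground_isFlat, inter_subset_right⟩⟩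
  exact Matroid.IsFlat.iInter fun F => F.2.1

lemma indep_finite (hE : M.E.Finite) (hI : M.Indep I) : I.Finite :=
  hE.subset hI.subset_ground

/-- Any independent subset of `X` has cardinality at most that of a `Basis'` of `X`. -/
lemma card_le_card_basis' (hE : M.E.Finite) (hB : M.IsBasis' I X) (hJ : M.Indep J)
    (hJX : J ⊆ X) : J.ncard ≤ I.ncard := by
  by_contra hlt
  push_neg at hlt
  have hIfin := indep_finite hE hB.indep
  have hJfin := indep_finite hE hJ
  have hcard : I.encard < J.encard := by
    rw [← hIfin.cast_ncard_eq, ← hJfin.cast_ncard_eq]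
    exact_mod_cast hlt
  obtain ⟨e, heJI, hins⟩ := hB.indep.augment hJ hcard
  exact hB.insert_not_indep ⟨hJX heJI.1, heJI.2⟩ hins

lemma mrk_eq_card_basis' (hE : M.E.Finite) (hB : M.IsBasis' I X) : mrk M X = I.ncard := by
  have hbdd : BddAbove (Set.ncard '' {J | M.Indep J ∧ J ⊆ X}) := by
    refine ⟨I.ncard, ?_⟩
    rintro n ⟨J, ⟨hJ, hJX⟩, rfl⟩
    exact card_le_card_basis' hE hB hJ hJX
  apply le_antisymm
  · refine csSup_le ⟨I.ncard, I, ⟨hB.indep, hB.subset⟩, rfl⟩ ?_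
    rintro n ⟨J, ⟨hJ, hJX⟩, rfl⟩
    exact card_le_card_basis' hE hB hJ hJX
  · exact le_csSup hbdd ⟨I, ⟨hB.indep, hB.subset⟩, rfl⟩

lemma le_mrk (hE : M.E.Finite) (hJ : M.Indep J) (hJX : J ⊆ X) : J.ncard ≤ mrk M X := by
  obtain ⟨I, hI⟩ := M.exists_isBasis' X
  rw [mrk_eq_card_basis' hE hI]
  exact card_le_card_basis' hE hI hJ hJX

lemma mrk_indep (hE : M.E.Finite) (hI : M.Indep I) : mrk M I = I.ncard :=
  mrk_eq_card_basis' hE hI.isBasis_self.isBasis'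

lemma mrk_mono (hE : M.E.Finite) (hXY : X ⊆ Y) : mrk M X ≤ mrk M Y := by
  obtain ⟨I, hI⟩ := M.exists_isBasis' X
  rw [mrk_eq_card_basis' hE hI]
  exact le_mrk hE hI.indep (hI.subset.trans hXY)

lemma mrk_le_ncard (hE : M.E.Finite) (hX : X.Finite) : mrk M X ≤ X.ncard := by
  obtain ⟨I, hI⟩ := M.exists_isBasis' X
  rw [mrk_eq_card_basis' hE hI]
  exact ncard_le_ncard hI.subset hX

lemma mrk_closure (hE : M.E.Finite) (X : Set α) : mrk M (M.closure X) = mrk M X := by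
  obtain ⟨I, hI⟩ := M.exists_isBasis' X
  rw [mrk_eq_card_basis' hE hI, mrk_eq_card_basis' hE hI.isBasis_closure_right.isBasis']

lemma mrk_congr_closure (hE : M.E.Finite) (h : M.closure X = M.closure Y) :
    mrk M X = mrk M Y := by
  rw [← mrk_closure hE X, h, mrk_closure hE Y]

lemma mrk_union_basis' (hE : M.E.Finite) (hB : M.IsBasis' J X) (Y : Set α) :
    mrk M (Y ∪ J) = mrk M (Y ∪ X) := by
  apply mrk_congr_closure hE
  rw [← M.closure_union_closure_right_eq Y J, hB.closure_eq_closure,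
    M.closure_union_closure_right_eq]

lemma mrk_submod (hE : M.E.Finite) (hX : X ⊆ M.E) (hY : Y ⊆ M.E) :
    mrk M (X ∪ Y) + mrk M (X ∩ Y) ≤ mrk M X + mrk M Y := by
  obtain ⟨I, hI⟩ := M.exists_isBasis (X ∩ Y) (inter_subset_left.trans hX)
  obtain ⟨J, hJ, hIJ⟩ := hI.indep.subset_isBasis_of_subset
    (hI.subset.trans (inter_subset_left.trans subset_union_left)) (union_subset hX hY)
  have hJfin := indep_finite hE hJ.indep
  have hJXY : J ∩ (X ∩ Y) = I := by
    refine (hI.eq_of_subset_indep (hJ.indep.inter_right (X ∩ Y)) ?_ inter_subset_right).symm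
    exact subset_inter hIJ hI.subset
  have h1 : (J ∩ X).ncard ≤ mrk M X := le_mrk hE (hJ.indep.inter_right X) inter_subset_right
  have h2 : (J ∩ Y).ncard ≤ mrk M Y := le_mrk hE (hJ.indep.inter_right Y) inter_subset_right
  have hu : (J ∩ X) ∪ (J ∩ Y) = J := by
    rw [← inter_union_distrib_left, inter_eq_left]
    exact hJ.subset
  have hi : (J ∩ X) ∩ (J ∩ Y) = I := by
    rw [← inter_inter_distrib_left, hJXY]
  have hsum := ncard_union_add_ncard_inter (J ∩ X) (J ∩ Y) (hJfin.inter_of_left X)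
      (hJfin.inter_of_left Y)
  rw [hu, hi] at hsum
  rw [mrk_eq_card_basis' hE hJ.isBasis', mrk_eq_card_basis' hE hI.isBasis']
  omega

/-- An auxiliary matroid construction: ground set `G`, independent sets are the
sets `I ⊆ G ∩ S` disjoint from `B` with `I ∪ B` independent in `M`. -/
noncomputable def matOn (M : Matroid α) (B S G : Set α) (hG : G.Finite) (hB : B.Finite)
    (hBi : M.Indep B) : Matroid α :=
  (IndepMatroid.ofFinite hG
    (fun I => I ⊆ G ∧ I ⊆ S ∧ Disjoint I B ∧ M.Indep (I ∪ B))
    (by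
      refine ⟨empty_subset _, empty_subset _, disjoint_left.2 (by simp), ?_⟩
      rwa [empty_union])
    (fun I J hJ hIJ => ⟨hIJ.trans hJ.1, hIJ.trans hJ.2.1, Disjoint.mono_left hIJ hJ.2.2.1,
      hJ.2.2.2.subset (union_subset_union_left B hIJ)⟩)
    (by
      rintro I J ⟨hIG, hIS, hIB, hIi⟩ ⟨hJG, hJS, hJB, hJi⟩ hlt
      have hIfin : I.Finite := hG.subset hIG
      have hJfin : J.Finite := hG.subset hJG
      have hcard : (I ∪ B).encard < (J ∪ B).encard := by
        rw [encard_union_eq hIB, encard_union_eq hJB, ← hIfin.cast_ncard_eq,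
          ← hJfin.cast_ncard_eq, ← hB.cast_ncard_eq]
        rw [← Nat.cast_add, ← Nat.cast_add, Nat.cast_lt]
        omega
      obtain ⟨e, he, hins⟩ := hIi.augment hJi hcard
      have heJ : e ∈ J := by
        rcases (mem_union _ _ _).1 he.1 with h | h
        · exact h
        · exact ((he.2 (mem_union_right _ h))).elim
      have heI : e ∉ I := fun h => he.2 (mem_union_left _ h)
      have heB : e ∉ B := fun h => he.2 (mem_union_right _ h)
      refine ⟨e, heJ, heI, insert_subset (hJG heJ) hIG, insert_subset (hJS heJ) hIS,
        ?_, ?_⟩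
      · have hd : Disjoint ({e} ∪ I) B :=
          Disjoint.union_left (disjoint_singleton_left.mpr heB) hIB
        rwa [singleton_union] at hd
      · rwa [Set.insert_union])
    (fun I hI => hI.1)).matroid

lemma matOn_ground (hG : G.Finite) (hB : B.Finite) (hBi : M.Indep B) :
    (matOn M B S G hG hB hBi).E = G := rfl

lemma matOn_indep_iff (hG : G.Finite) (hB : B.Finite) (hBi : M.Indep B) {I : Set α} :
    (matOn M B S G hG hB hBi).Indep I ↔
      I ⊆ G ∧ I ⊆ S ∧ Disjoint I B ∧ M.Indep (I ∪ B) := by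
  simp [matOn]

lemma matOn_mrk (hE : M.E.Finite) (hG : G.Finite) (hB : B.Finite) (hBi : M.Indep B)
    (Y : Set α) :
    mrk (matOn M B S G hG hB hBi) Y + B.ncard = mrk M (((Y ∩ G ∩ S ∩ M.E) \ B) ∪ B) := by
  set Z := (Y ∩ G ∩ S ∩ M.E) \ B with hZdef
  have hE' : (matOn M B S G hG hB hBi).E.Finite := by
    rw [matOn_ground]; exact hG
  have hZE : Z ⊆ M.E := fun x hx => hx.1.2
  have hZY : Z ⊆ Y := fun x hx => hx.1.1.1.1
  have hZG : Z ⊆ G := fun x hx => hx.1.1.1.2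
  have hZS : Z ⊆ S := fun x hx => hx.1.1.2
  have hZB : Disjoint Z B := disjoint_left.2 fun x hx => hx.2
  apply le_antisymm
  · -- ≤ : take a basis' K of Y in matOn
    obtain ⟨K, hK⟩ := (matOn M B S G hG hB hBi).exists_isBasis' Y
    obtain ⟨hKG, hKS, hKB, hKBi⟩ := (matOn_indep_iff hG hB hBi).1 hK.indep
    have hKZ : K ⊆ Z := by
      intro x hx
      refine ⟨⟨⟨⟨hK.subset hx, hKG hx⟩, hKS hx⟩,
        hKBi.subset_ground (mem_union_left _ hx)⟩, disjoint_left.1 hKB hx⟩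
    have hle := le_mrk hE hKBi (union_subset_union_left B hKZ)
    rw [ncard_union_eq hKB (hG.subset hKG) hB] at hle
    rwa [mrk_eq_card_basis' hE' hK]
  · -- ≥ : extend B to a basis of Z ∪ B
    obtain ⟨J', hJ', hBJ'⟩ := hBi.subset_isBasis_of_subset (subset_union_right (s := Z))
      (union_subset hZE hBi.subset_ground)
    have hJZ : J' \ B ⊆ Z := by
      intro x hx
      rcases hJ'.subset hx.1 with h | h
      · exact h
      · exact (hx.2 h).elim
    have hJind : (matOn M B S G hG hB hBi).Indep (J' \ B) := by
      rw [matOn_indep_iff]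
      refine ⟨hJZ.trans hZG, hJZ.trans hZS, disjoint_sdiff_left, ?_⟩
      rw [diff_union_of_subset hBJ']
      exact hJ'.indep
    have hle := le_mrk hE' hJind (hJZ.trans hZY)
    have hcard : (J' \ B).ncard + B.ncard = J'.ncard := by
      rw [← ncard_union_eq disjoint_sdiff_left ((hE.subset hJ'.left_subset_ground).diff) hB,
        diff_union_of_subset hBJ']
    rw [mrk_eq_card_basis' hE hJ'.isBasis']
    omega


lemma basis'_of_indep_of_card (hE : M.E.Finite) (hI : M.Indep I) (hIX : I ⊆ X)
    (hcard : I.ncard = mrk M X) : M.IsBasis' I X := by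
  obtain ⟨K, hK, hIK⟩ := hI.subset_isBasis'_of_subset hIX
  have hKI : I = K :=
    eq_of_subset_of_ncard_le hIK (by rw [hcard, mrk_eq_card_basis' hE hK]) (indep_finite hE hK.indep)
  rwa [hKI]

lemma mrk_empty (M : Matroid α) : mrk M ∅ = 0 := by
  have : {I | M.Indep I ∧ I ⊆ (∅ : Set α)} = {∅} := by
    ext I
    simp only [mem_setOf_eq, subset_empty_iff, mem_singleton_iff]
    exact ⟨fun h => h.2, fun h => ⟨h ▸ M.empty_indep, h⟩⟩
  rw [mrk, this]
  simp

theorem UT : ∀ (n : ℕ) {k : ℕ} (Ms : Fin k → Matroid α) (G : Set α), G.Finite → G.ncard = n →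
    (∀ i, (Ms i).E = G) → ∀ N : ℕ,
    (∀ X, X ⊆ G → N ≤ (∑ i, mrk (Ms i) X) + (G \ X).ncard) →
    ∃ I : Fin k → Set α, (∀ i, (Ms i).Indep (I i)) ∧
      Pairwise (Function.onFun Disjoint I) ∧ N ≤ ∑ i, (I i).ncard := by
  intro n
  induction n using Nat.strong_induction_on with
  | _ n IH =>
  intro k Ms G hGf hGn hEq N hyp
  have hMsE : ∀ i, (Ms i).E.Finite := fun i => (hEq i) ▸ hGf
  rcases Nat.eq_zero_or_pos N with rfl | hN
  · exact ⟨fun _ => ∅, fun i => (Ms i).empty_indep,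
      fun _ _ _ => Set.empty_disjoint ∅, by simp⟩
  by_cases hA : ∃ X, X ⊆ G ∧ X.Nonempty ∧ X ≠ G ∧ (∑ i, mrk (Ms i) X) + (G \ X).ncard ≤ N
  · -- Case A : a "tight" proper nonempty set exists; split into two smaller problems
    obtain ⟨X, hXG, hXne, hXneG, hXle⟩ := hA
    have hXf : X.Finite := hGf.subset hXG
    set N₁ := ∑ i, mrk (Ms i) X with hN₁
    -- Phase 1 : find disjoint bases of X in each Ms i
    set Ms₁ : Fin k → Matroid α :=
      fun i => matOn (Ms i) ∅ univ X hXf finite_empty (Ms i).empty_indep with hMs₁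
    have hM1rk : ∀ i (Y : Set α), Y ⊆ X → mrk (Ms₁ i) Y = mrk (Ms i) Y := by
      intro i Y hYX
      have h := matOn_mrk (M := Ms i) (S := univ) (hMsE i) hXf finite_empty
        (Ms i).empty_indep Y
      have hset : ((Y ∩ X ∩ univ ∩ (Ms i).E) \ ∅) ∪ ∅ = Y := by
        rw [hEq i, diff_empty, union_empty, inter_univ, inter_eq_self_of_subset_left hYX,
          inter_eq_self_of_subset_left (hYX.trans hXG)]
      rw [hset] at h
      simpa using h
    have hyp₁ : ∀ Y, Y ⊆ X → N₁ ≤ (∑ i, mrk (Ms₁ i) Y) + (X \ Y).ncard := by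
      intro Y hYX
      have h1 := hyp Y (hYX.trans hXG)
      have hGYeq : G \ Y = (G \ X) ∪ (X \ Y) := by
        ext x
        simp only [mem_diff, mem_union]
        constructor
        · rintro ⟨hxG, hxY⟩
          by_cases hx : x ∈ X
          · exact Or.inr ⟨hx, hxY⟩
          · exact Or.inl ⟨hxG, hx⟩
        · rintro (⟨hxG, hxX⟩ | ⟨hxX, hxY⟩)
          · exact ⟨hxG, fun h => hxX (hYX h)⟩
          · exact ⟨hXG hxX, hxY⟩
      have hsplit : (G \ Y).ncard = (G \ X).ncard + (X \ Y).ncard := by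
        rw [hGYeq, ncard_union_eq (disjoint_left.2 fun x hx1 hx2 => hx1.2 hx2.1)
          (hGf.diff) (hXf.diff)]
      have hsum : ∑ i, mrk (Ms₁ i) Y = ∑ i, mrk (Ms i) Y :=
        Finset.sum_congr rfl fun i _ => hM1rk i Y hYX
      omega
    have hlt₁ : X.ncard < n := hGn ▸ ncard_lt_ncard ⟨hXG, fun h => hXneG
      (subset_antisymm hXG h)⟩ hGf
    obtain ⟨Js, hJind, hJdisj, hJsum⟩ := IH X.ncard hlt₁ Ms₁ X hXf rfl
      (fun i => matOn_ground _ _ _) N₁ hyp₁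
    have hJX : ∀ i, Js i ⊆ X := fun i => ((matOn_indep_iff _ _ _).1 (hJind i)).1
    have hJindep : ∀ i, (Ms i).Indep (Js i) := by
      intro i
      have h := ((matOn_indep_iff _ _ _).1 (hJind i)).2.2.2
      rwa [union_empty] at h
    have hJle : ∀ i, (Js i).ncard ≤ mrk (Ms i) X :=
      fun i => le_mrk (hMsE i) (hJindep i) (hJX i)
    have hJcard : ∀ i, (Js i).ncard = mrk (Ms i) X := by
      have hsum_eq : ∑ i, (Js i).ncard = ∑ i, mrk (Ms i) X :=
        le_antisymm (Finset.sum_le_sum fun i _ => hJle i) hJsum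
      have := (Finset.sum_eq_sum_iff_of_le (fun i _ => hJle i)).1 hsum_eq
      exact fun i => this i (Finset.mem_univ i)
    have hJbasis : ∀ i, (Ms i).IsBasis' (Js i) X :=
      fun i => basis'_of_indep_of_card (hMsE i) (hJindep i) (hJX i) (hJcard i)
    -- Phase 2 : partition G \ X using the contractions
    have hJfin : ∀ i, (Js i).Finite := fun i => hXf.subset (hJX i)
    set Ms₂ : Fin k → Matroid α :=
      fun i => matOn (Ms i) (Js i) univ (G \ X) (hGf.diff) (hJfin i) (hJindep i) with hMs₂
    have hM2rk : ∀ i (Y : Set α), Y ⊆ G \ X →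
        mrk (Ms₂ i) Y + (Js i).ncard = mrk (Ms i) (X ∪ Y) := by
      intro i Y hYGX
      have h := matOn_mrk (M := Ms i) (S := univ) (hMsE i) (hGf.diff (t := X)) (hJfin i)
        (hJindep i) Y
      have hset : ((Y ∩ (G \ X) ∩ univ ∩ (Ms i).E) \ Js i) ∪ Js i = Y ∪ Js i := by
        rw [hEq i, inter_univ, inter_eq_self_of_subset_left hYGX,
          inter_eq_self_of_subset_left (hYGX.trans diff_subset)]
        rw [sdiff_eq_left.2 (disjoint_left.2 fun x hxY hxJ => (hYGX hxY).2 (hJX i hxJ))]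
      rw [hset, mrk_union_basis' (hMsE i) (hJbasis i) Y, union_comm Y X] at h
      exact h
    have hyp₂ : ∀ Y, Y ⊆ G \ X →
        (G \ X).ncard ≤ (∑ i, mrk (Ms₂ i) Y) + ((G \ X) \ Y).ncard := by
      intro Y hYGX
      have h1 := hyp (X ∪ Y) (union_subset hXG (hYGX.trans diff_subset))
      have hset : G \ (X ∪ Y) = (G \ X) \ Y := diff_diff.symm
      have hsum : (∑ i, mrk (Ms₂ i) Y) + N₁ = ∑ i, mrk (Ms i) (X ∪ Y) := by
        rw [hN₁, ← Finset.sum_add_distrib]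
        exact Finset.sum_congr rfl fun i _ => by
          rw [← hJcard i]; exact hM2rk i Y hYGX
      rw [hset] at h1
      omega
    have hlt₂ : (G \ X).ncard < n := by
      refine hGn ▸ ncard_lt_ncard ⟨diff_subset, fun h => ?_⟩ hGf
      obtain ⟨x, hx⟩ := hXne
      exact (h (hXG hx)).2 hx
    obtain ⟨Ks, hKind, hKdisj, hKsum⟩ := IH (G \ X).ncard hlt₂ Ms₂ (G \ X) (hGf.diff) rfl
      (fun i => matOn_ground _ _ _) (G \ X).ncard hyp₂
    have hKGX : ∀ i, Ks i ⊆ G \ X := fun i => ((matOn_indep_iff _ _ _).1 (hKind i)).1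
    have hKJdisj : ∀ i, Disjoint (Ks i) (Js i) :=
      fun i => ((matOn_indep_iff _ _ _).1 (hKind i)).2.2.1
    have hKJindep : ∀ i, (Ms i).Indep (Js i ∪ Ks i) := by
      intro i
      have h := ((matOn_indep_iff _ _ _).1 (hKind i)).2.2.2
      rwa [union_comm] at h
    have hKfin : ∀ i, (Ks i).Finite := fun i => (hGf.diff).subset (hKGX i)
    have hJKdisj : ∀ i j, Disjoint (Js i) (Ks j) := fun i j =>
      disjoint_left.2 fun x hxJ hxK => (hKGX j hxK).2 (hJX i hxJ)
    refine ⟨fun i => Js i ∪ Ks i, hKJindep, ?_, ?_⟩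
    · intro i j hij
      simp only [Function.onFun]
      refine Disjoint.union_left ?_ ?_ <;> refine Disjoint.union_right ?_ ?_
      · exact hJdisj hij
      · exact hJKdisj i j
      · exact (hJKdisj j i).symm
      · exact hKdisj hij
    · have hcard : ∀ i, (Js i ∪ Ks i).ncard = (Js i).ncard + (Ks i).ncard :=
        fun i => ncard_union_eq (hKJdisj i).symm (hJfin i) (hKfin i)
      have hX0 := hyp X hXG
      calc N ≤ N₁ + (G \ X).ncard := hX0
        _ ≤ (∑ i, (Js i).ncard) + ∑ i, (Ks i).ncard := by
            have : ∑ i, (Js i).ncard = N₁ := by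
              rw [hN₁]; exact Finset.sum_congr rfl fun i _ => hJcard i
            omega
        _ = ∑ i, ((fun i => Js i ∪ Ks i) i).ncard := by
            rw [← Finset.sum_add_distrib]
            exact (Finset.sum_congr rfl fun i _ => (hcard i)).symm
  · -- Case B : no tight proper nonempty set
    push_neg at hA
    have hA' : ∀ X, X ⊆ G → X.Nonempty → X ≠ G →
        N + 1 ≤ (∑ i, mrk (Ms i) X) + (G \ X).ncard := by
      intro X h1 h2 h3
      exact hA X h1 h2 h3
    by_cases hex : ∃ p : Fin k × α, p.2 ∈ G ∧ (Ms p.1).Indep {p.2}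
    · obtain ⟨⟨i₀, e⟩, heG, hei⟩ := hex
      set Bf : Fin k → Set α := fun i => if i = i₀ then ({e} : Set α) else ∅ with hBf
      have hBfin : ∀ i, (Bf i).Finite := by
        intro i; rw [hBf]; dsimp only; split <;> simp
      have hBind : ∀ i, (Ms i).Indep (Bf i) := by
        intro i; rw [hBf]; dsimp only; split
        · next h => rw [h]; exact hei
        · exact (Ms i).empty_indep
      have hBcard : ∀ i, (Bf i).ncard = if i = i₀ then 1 else 0 := by
        intro i; rw [hBf]; dsimp only; split <;> simp
      have hBsub : ∀ i, Bf i ⊆ {e} := by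
        intro i; rw [hBf]; dsimp only; split
        · exact subset_rfl
        · exact empty_subset _
      set G' := G \ {e} with hG'
      have hG'f : G'.Finite := (hGf.diff)
      set Ms' : Fin k → Matroid α :=
        fun i => matOn (Ms i) (Bf i) univ G' hG'f (hBfin i) (hBind i) with hMs'
      have hM'rk : ∀ i (Y : Set α), Y ⊆ G' →
          mrk (Ms' i) Y + (Bf i).ncard = mrk (Ms i) (Y ∪ Bf i) := by
        intro i Y hYG'
        have h := matOn_mrk (M := Ms i) (S := univ) (hMsE i) hG'f (hBfin i) (hBind i) Y
        have hset : ((Y ∩ G' ∩ univ ∩ (Ms i).E) \ Bf i) ∪ Bf i = Y ∪ Bf i := by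
          rw [hEq i, inter_univ, inter_eq_self_of_subset_left hYG',
            inter_eq_self_of_subset_left (hYG'.trans diff_subset)]
          rw [sdiff_eq_left.2 (disjoint_left.2 fun x hxY hxB => (hYG' hxY).2 (hBsub i hxB))]
        rw [hset] at h
        exact h
      have hyp' : ∀ Y, Y ⊆ G' → N - 1 ≤ (∑ i, mrk (Ms' i) Y) + (G' \ Y).ncard := by
        intro Y hYG'
        rcases Y.eq_empty_or_nonempty with rfl | hYne
        · have h0 := hyp ∅ (empty_subset G)
          rw [diff_empty] at h0 ⊢
          have hz : ∑ i, mrk (Ms i) ∅ = 0 :=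
            Finset.sum_eq_zero fun i _ => mrk_empty (Ms i)
          have hG'card : G'.ncard + 1 = G.ncard := by
            rw [hG']
            rw [ncard_diff_singleton_of_mem heG]
            have : 1 ≤ G.ncard := by
              rw [Nat.one_le_iff_ne_zero]
              intro hc
              rw [(ncard_eq_zero hGf).1 hc] at heG
              exact heG
            omega
          omega
        · have hYG : Y ⊆ G := hYG'.trans diff_subset
          have hYneG : Y ≠ G := by
            intro h
            have : e ∈ Y := h ▸ heG
            exact (hYG' this).2 rfl
          have h1 := hA' Y hYG hYne hYneG
          have hsum : ∀ i, mrk (Ms i) Y ≤ mrk (Ms' i) Y + (if i = i₀ then 1 else 0) := by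
            intro i
            rw [← hBcard i, hM'rk i Y hYG']
            exact mrk_mono (hMsE i) subset_union_left
          have hsums : ∑ i, mrk (Ms i) Y ≤ (∑ i, mrk (Ms' i) Y) + 1 := by
            calc ∑ i, mrk (Ms i) Y
                ≤ ∑ i, (mrk (Ms' i) Y + if i = i₀ then 1 else 0) :=
                  Finset.sum_le_sum fun i _ => hsum i
              _ = (∑ i, mrk (Ms' i) Y) + 1 := by
                  rw [Finset.sum_add_distrib, Finset.sum_ite_eq' Finset.univ i₀ fun _ => 1]
                  simp
          have hdiffcard : (G' \ Y).ncard + 1 = (G \ Y).ncard := by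
            have hrw : G' \ Y = (G \ Y) \ {e} := by
              rw [hG', diff_diff_comm]
            rw [hrw, ncard_diff_singleton_of_mem (show e ∈ G \ Y from ⟨heG, fun h => (hYG' h).2 rfl⟩)]
            have hpos : 1 ≤ (G \ Y).ncard := by
              rw [Nat.one_le_iff_ne_zero]
              intro hc
              have := (ncard_eq_zero (hGf.diff)).1 hc
              have heGY : e ∈ G \ Y := ⟨heG, fun h => (hYG' h).2 rfl⟩
              rw [this] at heGY
              exact heGY
            omega
          omega
      have hlt : G'.ncard < n := by
        refine hGn ▸ ncard_lt_ncard ⟨diff_subset, fun h => ?_⟩ hGf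
        exact (h heG).2 rfl
      obtain ⟨Is', hI'ind, hI'disj, hI'sum⟩ := IH G'.ncard hlt Ms' G' hG'f rfl
        (fun i => matOn_ground _ _ _) (N - 1) hyp'
      have hI'G' : ∀ i, Is' i ⊆ G' := fun i => ((matOn_indep_iff _ _ _).1 (hI'ind i)).1
      have hI'B : ∀ i, Disjoint (Is' i) (Bf i) :=
        fun i => ((matOn_indep_iff _ _ _).1 (hI'ind i)).2.2.1
      have hI'indep : ∀ i, (Ms i).Indep (Is' i ∪ Bf i) :=
        fun i => ((matOn_indep_iff _ _ _).1 (hI'ind i)).2.2.2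
      have hI'fin : ∀ i, (Is' i).Finite := fun i => hG'f.subset (hI'G' i)
      refine ⟨fun i => Is' i ∪ Bf i, hI'indep, ?_, ?_⟩
      · intro i j hij
        simp only [Function.onFun]
        have hIB : ∀ a b : Fin k, Disjoint (Is' a) (Bf b) := by
          intro a b
          refine disjoint_left.2 fun x hx hx' => ?_
          have : x = e := hBsub b hx'
          exact (hI'G' a hx).2 (this ▸ rfl)
        have hBB : Disjoint (Bf i) (Bf j) := by
          rcases eq_or_ne i i₀ with h1 | h1
          · have h2 : j ≠ i₀ := fun h => hij (by rw [h1, h])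
            have : Bf j = ∅ := by rw [hBf]; dsimp only; rw [if_neg h2]
            rw [this]
            exact Set.disjoint_empty _
          · have : Bf i = ∅ := by rw [hBf]; dsimp only; rw [if_neg h1]
            rw [this]
            exact Set.empty_disjoint _
        refine Disjoint.union_left ?_ ?_ <;> refine Disjoint.union_right ?_ ?_
        · exact hI'disj hij
        · exact hIB i j
        · exact (hIB j i).symm
        · exact hBB
      · have hcard : ∀ i, (Is' i ∪ Bf i).ncard = (Is' i).ncard + (Bf i).ncard :=
          fun i => ncard_union_eq (hI'B i) (hI'fin i) (hBfin i)
        have hBsum : ∑ i, (Bf i).ncard = 1 := by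
          calc ∑ i, (Bf i).ncard = ∑ i, (if i = i₀ then 1 else 0) :=
                Finset.sum_congr rfl fun i _ => hBcard i
            _ = 1 := by rw [Finset.sum_ite_eq' Finset.univ i₀ fun _ => 1]; simp
        have hfinal : ∑ i, (Is' i ∪ Bf i).ncard = (∑ i, (Is' i).ncard) + 1 := by
          rw [← hBsum, ← Finset.sum_add_distrib]
          exact Finset.sum_congr rfl fun i _ => hcard i
        show N ≤ ∑ i, (Is' i ∪ Bf i).ncard
        omega
    · -- no non-loop anywhere: all ranks are zero, so N = 0, contradiction
      exfalso
      push_neg at hex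
      have hzero : ∀ i, mrk (Ms i) G = 0 := by
        intro i
        obtain ⟨I, hI⟩ := (Ms i).exists_isBasis' G
        rcases I.eq_empty_or_nonempty with rfl | ⟨x, hx⟩
        · rw [mrk_eq_card_basis' (hMsE i) hI, ncard_empty]
        · exact absurd (hI.indep.subset (singleton_subset_iff.2 hx))
            (hex ⟨i, x⟩ (hI.subset hx))
      have h0 := hyp G subset_rfl
      rw [diff_self, ncard_empty] at h0
      have : ∑ i, mrk (Ms i) G = 0 := Finset.sum_eq_zero fun i _ => hzero i
      omega

lemma mrk_swap (hEf : M.E.Finite) (hB : M.Indep B) {A' : Set α} (hBA : B ⊆ M.closure A')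
    (hA' : A' ⊆ M.E) (hX : X ⊆ M.E) :
    mrk M (X ∪ A') + B.ncard ≤ mrk M (X ∪ B) + mrk M A' := by
  have hBE : B ⊆ M.E := hB.subset_ground
  have hsub := mrk_submod hEf (union_subset hX hBE) (union_subset hA' hBE)
    (X := X ∪ B) (Y := A' ∪ B)
  have h1 : mrk M (X ∪ A') ≤ mrk M ((X ∪ B) ∪ (A' ∪ B)) :=
    mrk_mono hEf (union_subset_union subset_union_left subset_union_left)
  have h2 : B.ncard ≤ mrk M ((X ∪ B) ∩ (A' ∪ B)) := by
    rw [← mrk_indep hEf hB]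
    exact mrk_mono hEf (subset_inter subset_union_right subset_union_right)
  have h3 : mrk M (A' ∪ B) = mrk M A' := by
    apply le_antisymm
    · have : A' ∪ B ⊆ M.closure A' := union_subset (M.subset_closure A' hA') hBA
      calc mrk M (A' ∪ B) ≤ mrk M (M.closure A') := mrk_mono hEf this
        _ = mrk M A' := mrk_closure hEf A'
    · exact mrk_mono hEf subset_union_left
  omega

lemma exists_disjoint_approx (M : Matroid α) (hEf : M.E.Finite) (k m : ℕ) (hk : 1 ≤ k)
    (hR : ∀ F A : Set α, M.IsFlat F → M.IsFlat A → F ⊆ A → m ≤ mrk M A →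
      k * (mrk M A - mrk M F) ≤ (A \ F).ncard)
    (A : Fin k → Set α) (hA : ∀ i, A i ⊆ M.E) :
    ∃ B : Fin k → Set α, (∀ i, B i ⊆ M.E) ∧ Pairwise (Function.onFun Disjoint B) ∧
      ∀ I : Finset (Fin k),
        mrk M (⋃ i ∈ I, B i) ≤ mrk M (⋃ i ∈ I, A i) ∧
        mrk M (⋃ i ∈ I, A i) ≤ mrk M (⋃ i ∈ I, B i) + k * m := by
  classical
  haveI : Nonempty (Fin k) := ⟨⟨0, hk⟩⟩
  set S : Fin k → Set α := fun i => M.closure (A i) with hS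
  have hSE : ∀ i, S i ⊆ M.E := fun i => M.closure_subset_ground (A i)
  set d : Fin k → ℕ := fun i => mrk M (S i) with hd
  have hdA : ∀ i, d i = mrk M (A i) := fun i => mrk_closure hEf (A i)
  set Ms : Fin k → Matroid α :=
    fun i => matOn M ∅ (S i) M.E hEf finite_empty M.empty_indep with hMs
  have hMsrk : ∀ i (X : Set α), X ⊆ M.E → mrk (Ms i) X = mrk M (X ∩ S i) := by
    intro i X hX
    have h := matOn_mrk (M := M) (B := ∅) (S := S i) (G := M.E) hEf hEf finite_empty
      M.empty_indep X
    have hset : ((X ∩ M.E ∩ S i ∩ M.E) \ ∅) ∪ ∅ = X ∩ S i := by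
      rw [diff_empty, union_empty, inter_eq_self_of_subset_left hX]
      rw [inter_assoc, inter_eq_self_of_subset_left (hSE i), ]
    rw [hset] at h
    simpa using h
  set N : ℕ := (∑ i, d i) - k * m with hN
  have hyp : ∀ X, X ⊆ M.E → N ≤ (∑ i, mrk (Ms i) X) + (M.E \ X).ncard := by
    intro X hX
    have hrw : ∑ i, mrk (Ms i) X = ∑ i, mrk M (X ∩ S i) :=
      Finset.sum_congr rfl fun i _ => hMsrk i X hX
    have key : ∑ i, d i ≤ (∑ i, mrk M (X ∩ S i)) + (M.E \ X).ncard + k * m := by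
      set δ : Fin k → ℕ := fun i => d i - mrk M (X ∩ S i) with hδ
      have hsum1 : ∑ i, d i ≤ (∑ i, mrk M (X ∩ S i)) + ∑ i, δ i := by
        rw [← Finset.sum_add_distrib]
        refine Finset.sum_le_sum fun i _ => ?_
        simp only [hδ]
        omega
      obtain ⟨i₀, -, hi₀⟩ := Finset.exists_max_image Finset.univ δ Finset.univ_nonempty
      have hbound : ∑ i, δ i ≤ k * δ i₀ := by
        calc ∑ i, δ i ≤ ∑ _i : Fin k, δ i₀ :=
              Finset.sum_le_sum fun i _ => hi₀ i (Finset.mem_univ i)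
          _ = k * δ i₀ := by rw [Finset.sum_const, Finset.card_univ, Fintype.card_fin,
              smul_eq_mul]
      by_cases hcase : δ i₀ ≤ m
      · have : k * δ i₀ ≤ k * m := Nat.mul_le_mul_left k hcase
        omega
      · push_neg at hcase
        set F : Set α := M.closure (X ∩ S i₀) with hF
        have hFS : F ⊆ S i₀ := by
          rw [hF, hS]
          calc M.closure (X ∩ M.closure (A i₀)) ⊆ M.closure (M.closure (A i₀)) :=
                M.closure_subset_closure inter_subset_right
            _ = M.closure (A i₀) := M.closure_closure (A i₀)
        have hrkF : mrk M F = mrk M (X ∩ S i₀) := mrk_closure hEf _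
        have hδle : δ i₀ ≤ d i₀ := by simp only [hδ]; omega
        have hdi₀ : d i₀ = mrk M (S i₀) := rfl
        have hm : m ≤ mrk M (S i₀) := by
          have : m + 1 ≤ δ i₀ := hcase
          omega
        have hSflat : M.IsFlat (S i₀) := by rw [hS]; exact flat_closure M (A i₀)
        have hFflat : M.IsFlat F := flat_closure M _
        have hRapp := hR F (S i₀) hFflat hSflat hFS hm
        have hsubd : S i₀ \ F ⊆ M.E \ X := by
          rintro x ⟨hxS, hxF⟩
          refine ⟨hSE i₀ hxS, fun hxX => hxF ?_⟩
          exact M.subset_closure (X ∩ S i₀) (inter_subset_right.trans (hSE i₀)) ⟨hxX, hxS⟩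
        have hcard : (S i₀ \ F).ncard ≤ (M.E \ X).ncard :=
          ncard_le_ncard hsubd (hEf.diff)
        have hδeq : mrk M (S i₀) - mrk M F = δ i₀ := by
          rw [hrkF]
        rw [hδeq] at hRapp
        omega
    omega
  obtain ⟨Is, hIind, hIdisj, hIsum⟩ := UT M.E.ncard (Ms := Ms) M.E hEf rfl
    (fun i => matOn_ground _ _ _) N hyp
  have hIE : ∀ i, Is i ⊆ M.E := fun i => ((matOn_indep_iff _ _ _).1 (hIind i)).1
  have hIS : ∀ i, Is i ⊆ S i := fun i => ((matOn_indep_iff _ _ _).1 (hIind i)).2.1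
  have hIindep : ∀ i, M.Indep (Is i) := by
    intro i
    have h := ((matOn_indep_iff _ _ _).1 (hIind i)).2.2.2
    rwa [union_empty] at h
  have hIle : ∀ i, (Is i).ncard ≤ d i := fun i => le_mrk hEf (hIindep i) (hIS i)
  have hglobal : ∑ i, d i ≤ (∑ i, (Is i).ncard) + k * m := by
    have h0 := hyp M.E subset_rfl
    omega
  have main : ∀ I : Finset (Fin k), ∀ X, X ⊆ M.E →
      mrk M (X ∪ ⋃ i ∈ I, A i) + ∑ i ∈ I, (Is i).ncard ≤
        mrk M (X ∪ ⋃ i ∈ I, Is i) + ∑ i ∈ I, d i := by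
    intro I
    induction I using Finset.induction_on with
    | empty => simp
    | @insert j I hjI ih =>
      intro X hX
      rw [Finset.set_biUnion_insert, Finset.set_biUnion_insert,
        Finset.sum_insert hjI, Finset.sum_insert hjI]
      have hUA : (⋃ i ∈ I, A i) ⊆ M.E := iUnion₂_subset fun i _ => hA i
      have hUB : (⋃ i ∈ I, Is i) ⊆ M.E := iUnion₂_subset fun i _ => hIE i
      have h1 := ih (X ∪ A j) (union_subset hX (hA j))
      have h2 := mrk_swap hEf (hIindep j) (A' := A j) (hIS j) (hA j)
        (X := X ∪ ⋃ i ∈ I, Is i) (union_subset hX hUB)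
      have e1 : X ∪ (A j ∪ ⋃ i ∈ I, A i) = (X ∪ A j) ∪ ⋃ i ∈ I, A i :=
        (union_assoc _ _ _).symm
      have e2 : (X ∪ A j) ∪ (⋃ i ∈ I, Is i) = (X ∪ ⋃ i ∈ I, Is i) ∪ A j :=
        union_right_comm _ _ _
      have e3 : (X ∪ ⋃ i ∈ I, Is i) ∪ Is j = X ∪ (Is j ∪ ⋃ i ∈ I, Is i) := by
        rw [union_assoc, union_comm (⋃ i ∈ I, Is i) (Is j)]
      rw [e1]
      rw [e2] at h1
      rw [e3] at h2
      have hdj : d j = mrk M (A j) := hdA j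
      omega
  refine ⟨Is, hIE, hIdisj, fun I => ⟨?_, ?_⟩⟩
  · have hsub : (⋃ i ∈ I, Is i) ⊆ M.closure (⋃ i ∈ I, A i) := by
      refine iUnion₂_subset fun i hi => (hIS i).trans ?_
      rw [hS]
      exact M.closure_subset_closure (subset_biUnion_of_mem hi)
    calc mrk M (⋃ i ∈ I, Is i) ≤ mrk M (M.closure (⋃ i ∈ I, A i)) := mrk_mono hEf hsub
      _ = mrk M (⋃ i ∈ I, A i) := mrk_closure hEf _
  · have h := main I ∅ (empty_subset _)
    rw [empty_union, empty_union] at h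
    have hc1 : ∑ i ∈ I, (Is i).ncard + ∑ i ∈ Iᶜ, (Is i).ncard = ∑ i, (Is i).ncard :=
      Finset.sum_add_sum_compl I _
    have hc2 : ∑ i ∈ I, d i + ∑ i ∈ Iᶜ, d i = ∑ i, d i :=
      Finset.sum_add_sum_compl I _
    have hc3 : ∑ i ∈ Iᶜ, (Is i).ncard ≤ ∑ i ∈ Iᶜ, d i :=
      Finset.sum_le_sum fun i _ => hIle i
    omega

end Stmt9Aux

/-- If a finite matroid `M` satisfies `R(k,m)` with `m ≥ k ≥ 1`, then
the Hausdorff distance between `T_k(ρ)` and `T_k^Δ(ρ)` is at most `k·m/r(E)`. -/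
theorem stmt9 {α : Type*} (M : Matroid α) [M.Finite] (k m : ℕ)
    (hk : 1 ≤ k) (hkm : k ≤ m)
    (hR : ∀ F A : Set α, M.IsFlat F → M.IsFlat A → F ⊆ A → m ≤ mrk M A →
      k * (mrk M A - mrk M F) ≤ (A \ F).ncard) :
    Metric.hausdorffDist (matCrops M (mrk M M.E : ℝ) k)
        (matCropsDisj M (mrk M M.E : ℝ) k)
      ≤ (k : ℝ) * m / (mrk M M.E : ℝ) := by
  classical
  have hEf : M.E.Finite := M.ground_finite
  have hc0 : (0:ℝ) ≤ (mrk M M.E : ℝ) := Nat.cast_nonneg _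
  have hr0 : (0:ℝ) ≤ (k : ℝ) * m / (mrk M M.E : ℝ) := div_nonneg (by positivity) hc0
  apply Metric.hausdorffDist_le_of_mem_dist hr0
  · rintro ψ ⟨A, hA, rfl⟩
    obtain ⟨B, hBE, hBdisj, hB⟩ := Stmt9Aux.exists_disjoint_approx M hEf k m hk hR A hA
    refine ⟨_, ⟨B, hBE, hBdisj, rfl⟩, ?_⟩
    rw [dist_pi_le_iff hr0]
    intro I
    obtain ⟨h1, h2⟩ := hB I
    have hab : |((mrk M (⋃ i ∈ I, A i) : ℕ) : ℝ) - ((mrk M (⋃ i ∈ I, B i) : ℕ) : ℝ)|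
        ≤ (k : ℝ) * m := by
      rw [abs_of_nonneg (sub_nonneg.2 (Nat.cast_le.2 h1))]
      have h2' := (Nat.cast_le (α := ℝ)).2 h2
      push_cast at h2' ⊢
      linarith
    rw [Real.dist_eq, div_sub_div_same, abs_div, abs_of_nonneg hc0]
    rcases hc0.eq_or_lt with heq | hpos
    · rw [← heq]
      simp
    · exact (div_le_div_iff_of_pos_right hpos).2 hab
  · rintro ψ ⟨B, hBE, hBdisj, rfl⟩
    exact ⟨_, ⟨B, hBE, rfl⟩, by rw [dist_self]; exact hr0⟩
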